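/- Let μ be a nonadditive measure and 0 < p,q < ∞. For any measurable f and any α ∈ ℝ, the Sugeno-Lorentz prenorm satisfies (αf)_{p,q} ≤ max(1, |α|) · (f)_{p,q} (truncated subhomogeneity). -/

import Mathlib

open scoped NNReal ENNReal
open ENNReal Filter Topology

variable {X : Type*} [MeasurableSpace X]

/-- The Sugeno integral of `g` w.r.t. a nonadditive measure `μ`:
`Su(μ,g) := sup_{t ∈ [0,∞)} min(t, μ({g > t}))`. -/
noncomputable def Su (μ : Set X → ℝ≥0∞) (g : X → ℝ≥0∞) : ℝ≥0∞ :=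
  ⨆ t : ℝ≥0, min (t : ℝ≥0∞) (μ {x | (t : ℝ≥0∞) < g x})

/-- The Sugeno-Lorentz prenorm `(f)_{p,q} := (Su(μ^{p/q}, (p/q)|f|^q))^{1/q}`. -/
noncomputable def SL (μ : Set X → ℝ≥0∞) (p q : ℝ) (f : X → ℝ) : ℝ≥0∞ :=
  (Su (fun A => μ A ^ (p / q)) (fun x => ENNReal.ofReal ((p / q) * |f x| ^ q))) ^ (1 / q)

/-- Truncated subhomogeneity of the Sugeno-Lorentz prenorm:
`(αf)_{p,q} ≤ max(1, |α|)·(f)_{p,q}`. -/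
theorem SL_truncated_subhomogeneous
    (μ : Set X → ℝ≥0∞) (h0 : μ ∅ = 0)
    (hmono : ∀ ⦃A B : Set X⦄, MeasurableSet A → MeasurableSet B → A ⊆ B → μ A ≤ μ B)
    (p q : ℝ) (hp : 0 < p) (hq : 0 < q) (f : X → ℝ) (hf : Measurable f) (α : ℝ) :
    SL μ p q (fun x => α * f x) ≤ max 1 (ENNReal.ofReal |α|) * SL μ p q f := by
  set ν : Set X → ℝ≥0∞ := fun A => μ A ^ (p / q) with hν
  have hν0 : ν ∅ = 0 := by
    simp [hν, h0, ENNReal.zero_rpow_of_pos (div_pos hp hq)]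
  set k : ℝ≥0∞ := ENNReal.ofReal (|α| ^ q) with hk
  set g : X → ℝ≥0∞ := fun x => ENNReal.ofReal ((p / q) * |f x| ^ q) with hg
  have hfun : (fun x => ENNReal.ofReal ((p / q) * |α * f x| ^ q)) = fun x => k * g x := by
    funext x
    have h1 : |α * f x| ^ q = |α| ^ q * |f x| ^ q := by
      rw [abs_mul, Real.mul_rpow (abs_nonneg _) (abs_nonneg _)]
    rw [h1, hk, hg]
    rw [show (p / q) * (|α| ^ q * |f x| ^ q) = |α| ^ q * ((p / q) * |f x| ^ q) by ring]
    rw [ENNReal.ofReal_mul (Real.rpow_nonneg (abs_nonneg _) _)]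
  have hsu : Su ν (fun x => k * g x) ≤ max 1 k * Su ν g := by
    rcases eq_or_ne k 0 with hk0 | hk0
    · apply iSup_le; intro t
      have : {x | (t : ℝ≥0∞) < k * g x} = ∅ := by
        ext x; simp [hk0]
      simp [this, hν0]
    · have hktop : k ≠ ∞ := ENNReal.ofReal_ne_top
      apply iSup_le; intro t
      have hset : {x | (t : ℝ≥0∞) < k * g x} = {x | (t : ℝ≥0∞) / k < g x} := by
        ext x
        simp only [Set.mem_setOf_eq]
        rw [ENNReal.div_lt_iff (Or.inl hk0) (Or.inl hktop), mul_comm]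
      rw [hset]
      have hdiv : (t : ℝ≥0∞) / k ≠ ∞ :=
        (ENNReal.div_lt_top ENNReal.coe_ne_top hk0).ne
      set s : ℝ≥0 := ((t : ℝ≥0∞) / k).toNNReal with hs
      have hscoe : ((s : ℝ≥0∞)) = (t : ℝ≥0∞) / k := ENNReal.coe_toNNReal hdiv
      have step1 : min (t : ℝ≥0∞) (ν {x | (t : ℝ≥0∞) / k < g x})
          ≤ max 1 k * min ((t : ℝ≥0∞) / k) (ν {x | (t : ℝ≥0∞) / k < g x}) := by
        rcases le_total ((t : ℝ≥0∞) / k) (ν {x | (t : ℝ≥0∞) / k < g x}) with h | h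
        · rw [min_eq_left h]
          refine min_le_of_left_le ?_
          calc (t : ℝ≥0∞) = k * ((t : ℝ≥0∞) / k) := (ENNReal.mul_div_cancel hk0 hktop).symm
            _ ≤ max 1 k * ((t : ℝ≥0∞) / k) := mul_le_mul_left (le_max_right _ _) _
        · rw [min_eq_right h]
          exact min_le_of_right_le (le_mul_of_one_le_left' (le_max_left _ _))
      refine step1.trans (mul_le_mul_right ?_ _)
      have := le_iSup (fun t : ℝ≥0 => min (t : ℝ≥0∞) (ν {x | (t : ℝ≥0∞) < g x})) s
      rwa [hscoe] at this
  have hmax : (max 1 k) ^ (1 / q) ≤ max 1 (ENNReal.ofReal |α|) := by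
    have hkp : k ^ (1 / q) = ENNReal.ofReal |α| := by
      rw [hk, ENNReal.ofReal_rpow_of_nonneg (Real.rpow_nonneg (abs_nonneg _) _)
        (by positivity), ← Real.rpow_mul (abs_nonneg α),
        mul_one_div_cancel hq.ne', Real.rpow_one]
    rcases le_total k 1 with h | h
    · rw [max_eq_left h, ENNReal.one_rpow]; exact le_max_left _ _
    · rw [max_eq_right h, hkp]; exact le_max_right _ _
  calc SL μ p q (fun x => α * f x)
      = (Su ν (fun x => k * g x)) ^ (1 / q) := by rw [SL, hfun]
    _ ≤ (max 1 k * Su ν g) ^ (1 / q) :=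
        ENNReal.rpow_le_rpow hsu (by positivity)
    _ = (max 1 k) ^ (1 / q) * (Su ν g) ^ (1 / q) :=
        ENNReal.mul_rpow_of_nonneg _ _ (by positivity)
    _ ≤ max 1 (ENNReal.ofReal |α|) * SL μ p q f :=
        mul_le_mul_left hmax _
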